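/- Let X be a compact Hausdorff space and let γ = (γ_1, …, γ_N) be an iterated function system on X such that every γ_k is a topological embedding. Fix m, n ∈ ℕ. For continuous functions f : X_m → ℂ and g : X_n → ℂ, define f ⊡ g : X_{m+n} → ℂ by (f ⊡ g)(x_{m+n}, …, x_0) := f(x_{m+n}, …, x_n) · g(x_n, …, x_0). Then the closed additive subgroup of C(X_{m+n}, ℂ), with respect to the supremum norm, generated by the set {f ⊡ g : f ∈ C(X_m, ℂ), g ∈ C(X_n, ℂ)} is all of C(X_{m+n}, ℂ). -/

import Mathlib

/-- `c : Fin (n+1) → X` (written `(x_n, …, x_0)` with `x_i = c i`) is a `γ`-chain of length `n`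
if for each `i < n` there is an index `k` with `x_{i+1} = γ k (x_i)`. -/
def IsGammaChain {X : Type*} {N : ℕ} (γ : Fin N → X → X) (n : ℕ)
    (c : Fin (n + 1) → X) : Prop :=
  ∀ i : ℕ, ∀ h : i < n, ∃ k : Fin N, c ⟨i + 1, by omega⟩ = γ k (c ⟨i, by omega⟩)

/-- The upper part `(x_{m+n}, …, x_n)` of a `γ`-chain of length `m + n` is a `γ`-chain of
length `m`. -/
lemma IsGammaChain.high {X : Type*} {N : ℕ} {γ : Fin N → X → X} {m n : ℕ}
    {c : Fin (m + n + 1) → X} (hc : IsGammaChain γ (m + n) c) :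
    IsGammaChain γ m (fun i : Fin (m + 1) => c ⟨n + i.1, by omega⟩) := by
  intro i hi
  obtain ⟨k, hk⟩ := hc (n + i) (by omega)
  exact ⟨k, hk⟩

/-- The lower part `(x_n, …, x_0)` of a `γ`-chain of length `m + n` is a `γ`-chain of
length `n`. -/
lemma IsGammaChain.low {X : Type*} {N : ℕ} {γ : Fin N → X → X} {m n : ℕ}
    {c : Fin (m + n + 1) → X} (hc : IsGammaChain γ (m + n) c) :
    IsGammaChain γ n (fun i : Fin (n + 1) => c ⟨i.1, by omega⟩) := by
  intro i hi
  obtain ⟨k, hk⟩ := hc i (by omega)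
  exact ⟨k, hk⟩

lemma isClosed_gammaChain {X : Type*} [TopologicalSpace X] [T2Space X] {N : ℕ}
    (γ : Fin N → X → X) (hc : ∀ k, Continuous (γ k)) (n : ℕ) :
    IsClosed {c : Fin (n + 1) → X | IsGammaChain γ n c} := by
  have : {c : Fin (n + 1) → X | IsGammaChain γ n c} =
      ⋂ (i : ℕ) (h : i < n), ⋃ k : Fin N,
        {c : Fin (n + 1) → X | c ⟨i + 1, by omega⟩ = γ k (c ⟨i, by omega⟩)} := by
    ext c
    simp only [IsGammaChain, Set.mem_setOf_eq, Set.mem_iInter, Set.mem_iUnion]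
  rw [this]
  refine isClosed_iInter fun i => isClosed_iInter fun h => isClosed_iUnion_of_finite fun k => ?_
  exact isClosed_eq (continuous_apply _) ((hc k).comp (continuous_apply _))

lemma aux_addgroup_dense {Y : Type*} [TopologicalSpace Y] [CompactSpace Y] [T2Space Y]
    (S : Set C(Y, ℂ)) (h1 : (1 : C(Y, ℂ)) ∈ S)
    (hmul : ∀ a ∈ S, ∀ b ∈ S, a * b ∈ S)
    (hstar : ∀ a ∈ S, star a ∈ S)
    (hsmul : ∀ (c : ℂ), ∀ a ∈ S, c • a ∈ S)
    (hsep : ∀ x y : Y, x ≠ y → ∃ a ∈ S, a x ≠ a y) :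
    (AddSubgroup.closure S).topologicalClosure = ⊤ := by
  set G := AddSubgroup.closure S with hG
  have hGmul : ∀ a ∈ G, ∀ b ∈ G, a * b ∈ G := by
    intro a ha
    induction ha using AddSubgroup.closure_induction with
    | mem x hx =>
      intro b hb
      induction hb using AddSubgroup.closure_induction with
      | mem y hy => exact AddSubgroup.subset_closure (hmul x hx y hy)
      | zero => simpa using zero_mem G
      | add y z hy hz ihy ihz => simpa [mul_add] using add_mem ihy ihz
      | neg y hy ihy => simpa [mul_neg] using neg_mem ihy
    | zero => intro b hb; simpa using zero_mem G
    | add x y hx hy ihx ihy =>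
      intro b hb; simpa [add_mul] using add_mem (ihx b hb) (ihy b hb)
    | neg x hx ihx => intro b hb; simpa [neg_mul] using neg_mem (ihx b hb)
  have hsub : (StarAlgebra.adjoin ℂ S : Set C(Y, ℂ)) ⊆ (G : Set C(Y, ℂ)) := by
    intro x hx
    induction hx using StarAlgebra.adjoin_induction with
    | mem x hx => exact AddSubgroup.subset_closure hx
    | algebraMap r =>
      have : (algebraMap ℂ C(Y, ℂ)) r = r • (1 : C(Y, ℂ)) := by
        simp [Algebra.algebraMap_eq_smul_one]
      rw [this]
      exact AddSubgroup.subset_closure (hsmul r 1 h1)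
    | add x y hx hy ihx ihy => exact add_mem ihx ihy
    | mul x y hx hy ihx ihy => exact hGmul x ihx y ihy
    | star x hx ihx =>
      clear hx
      induction ihx using AddSubgroup.closure_induction with
      | mem y hy => exact AddSubgroup.subset_closure (hstar y hy)
      | zero => simpa using zero_mem G
      | add y z hy hz ihy ihz => simpa [star_add] using add_mem ihy ihz
      | neg y hy ihy => simpa using neg_mem ihy
  have hsep' : (StarAlgebra.adjoin ℂ S).SeparatesPoints := by
    intro x y hxy
    obtain ⟨a, haS, ha⟩ := hsep x y hxy
    exact ⟨_, ⟨a, StarAlgebra.subset_adjoin ℂ S haS, rfl⟩, ha⟩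
  have htop := ContinuousMap.starSubalgebra_topologicalClosure_eq_top_of_separatesPoints
    (StarAlgebra.adjoin ℂ S) hsep'
  rw [eq_top_iff]
  intro x _
  have hx : x ∈ closure ((StarAlgebra.adjoin ℂ S : Set C(Y, ℂ))) := by
    have : x ∈ (StarAlgebra.adjoin ℂ S).topologicalClosure := htop ▸ trivial
    exact this
  exact closure_mono hsub hx

/-- Proposition 3.15: if `X` is compact Hausdorff and all maps of the iterated function
system `γ` are embeddings, then the closed additive subgroup of `C(X_{m+n}, ℂ)` generated by
the products `f ⊡ g`, where `(f ⊡ g)(x_{m+n}, …, x_0) = f(x_{m+n}, …, x_n) · g(x_n, …, x_0)`,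
is all of `C(X_{m+n}, ℂ)`. -/
theorem boxdot_generates {X : Type*} [TopologicalSpace X] [CompactSpace X] [T2Space X]
    {N : ℕ} (γ : Fin N → X → X) (hemb : ∀ k, Topology.IsEmbedding (γ k)) (m n : ℕ) :
    (AddSubgroup.closure
        {h : C({c : Fin (m + n + 1) → X // IsGammaChain γ (m + n) c}, ℂ) |
          ∃ (f : C({c : Fin (m + 1) → X // IsGammaChain γ m c}, ℂ))
            (g : C({c : Fin (n + 1) → X // IsGammaChain γ n c}, ℂ)),
            ∀ c : {c : Fin (m + n + 1) → X // IsGammaChain γ (m + n) c},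
              h c = f ⟨fun i => c.1 ⟨n + i.1, by omega⟩, c.2.high⟩ *
                g ⟨fun i => c.1 ⟨i.1, by omega⟩, c.2.low⟩}).topologicalClosure = ⊤ := by
  have hcont : ∀ k, Continuous (γ k) := fun k => (hemb k).continuous
  haveI : CompactSpace {c : Fin (m + n + 1) → X // IsGammaChain γ (m + n) c} :=
    isCompact_iff_compactSpace.mp ((isClosed_gammaChain γ hcont (m + n)).isCompact)
  apply aux_addgroup_dense
  · exact ⟨1, 1, fun c => by simp⟩
  · rintro a ⟨f, g, hfg⟩ b ⟨f', g', hfg'⟩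
    exact ⟨f * f', g * g', fun c => by
      simp only [ContinuousMap.mul_apply, hfg c, hfg' c]; ring⟩
  · rintro a ⟨f, g, hfg⟩
    exact ⟨star f, star g, fun c => by
      simp only [ContinuousMap.star_apply, hfg c, star_mul']⟩
  · rintro r a ⟨f, g, hfg⟩
    exact ⟨r • f, g, fun c => by
      simp only [ContinuousMap.smul_apply, hfg c, smul_eq_mul]; ring⟩
  · intro x y hxy
    have hne : x.1 ≠ y.1 := fun h => hxy (Subtype.ext h)
    obtain ⟨j, hj⟩ := Function.ne_iff.mp hne
    obtain ⟨φ, hφ0, hφ1, -⟩ := exists_continuous_zero_one_of_isClosed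
      (isClosed_singleton (x := x.1 j)) (isClosed_singleton (x := y.1 j))
      (Set.disjoint_singleton.mpr hj)
    set ψ : C(X, ℂ) := ⟨fun z => (φ z : ℂ), Complex.continuous_ofReal.comp φ.continuous⟩
      with hψ
    set a : C({c : Fin (m + n + 1) → X // IsGammaChain γ (m + n) c}, ℂ) :=
      ψ.comp ⟨fun c => c.1 j, (continuous_apply j).comp continuous_subtype_val⟩ with ha
    have haxy : a x ≠ a y := by
      have h0 : a x = 0 := by
        simp only [ha, ContinuousMap.comp_apply, ContinuousMap.coe_mk, hψ]
        rw [show φ (x.1 j) = 0 from hφ0 rfl]; simp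
      have h1 : a y = 1 := by
        simp only [ha, ContinuousMap.comp_apply, ContinuousMap.coe_mk, hψ]
        rw [show φ (y.1 j) = 1 from hφ1 rfl]; simp
      rw [h0, h1]; exact zero_ne_one
    refine ⟨a, ?_, haxy⟩
    by_cases hjn : j.1 ≤ n
    · refine ⟨1, ψ.comp ⟨fun d => d.1 ⟨j.1, by omega⟩,
        by exact (continuous_apply _).comp continuous_subtype_val⟩, fun c => ?_⟩
      simp only [ha, ContinuousMap.comp_apply, ContinuousMap.coe_mk, ContinuousMap.one_apply,
        one_mul]
    · refine ⟨ψ.comp ⟨fun d => d.1 ⟨j.1 - n, by omega⟩,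
        by exact (continuous_apply _).comp continuous_subtype_val⟩, 1, fun c => ?_⟩
      simp only [ha, ContinuousMap.comp_apply, ContinuousMap.coe_mk, ContinuousMap.one_apply,
        mul_one]
      congr 1
      exact congrArg c.1 (Fin.ext (by simp; omega))
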